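/- For the VRRW on ℤ and any x, the crossing sums Y^+_n(x) = ∑_{k≤n} 1_{X_{k-1}=x, X_k=x+1}/Z_{k-1}(x+1) and Ỹ^+_n(x) = ∑_{k≤n} 1_{X_{k-1}=x+1, X_k=x}/Z_{k-1}(x+1) satisfy: Y^+_n(x) - Ỹ^+_n(x) + 1_{X_n ≤ x}/Z_{n-1}(x+1) is eventually constant in n. -/

import Mathlib

open MeasureTheory Filter

/-- `Znum X n v ω` is `1` plus the number of visits of the walk `X` to the site
`v` up through time `n` (the quantity `Z_n(v)` of the paper), as a real number. -/
noncomputable def Znum {Ω : Type*} (X : ℕ → Ω → ℤ) (n : ℕ) (v : ℤ) (ω : Ω) : ℝ :=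
  1 + ∑ i ∈ Finset.range (n + 1), if X i ω = v then (1 : ℝ) else 0

/-- `Y_n(x)`: weighted number of visits to `x` up to time `n`. -/
noncomputable def Ynum {Ω : Type*} (X : ℕ → Ω → ℤ) (n : ℕ) (x : ℤ) (ω : Ω) : ℝ :=
  ∑ k ∈ Finset.Icc 1 n,
    (if X (k - 1) ω = x then (1 : ℝ) else 0) /
      (Znum X (k - 1) (x - 1) ω + Znum X (k - 1) (x + 1) ω)

/-- `Y⁺_n(x)`: weighted number of crossings from `x` to `x+1` up to time `n`. -/
noncomputable def Yplus {Ω : Type*} (X : ℕ → Ω → ℤ) (n : ℕ) (x : ℤ) (ω : Ω) : ℝ :=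
  ∑ k ∈ Finset.Icc 1 n,
    (if X (k - 1) ω = x ∧ X k ω = x + 1 then (1 : ℝ) else 0) / Znum X (k - 1) (x + 1) ω

/-- `Y⁻_n(x)`: weighted number of crossings from `x` to `x-1` up to time `n`. -/
noncomputable def Yminus {Ω : Type*} (X : ℕ → Ω → ℤ) (n : ℕ) (x : ℤ) (ω : Ω) : ℝ :=
  ∑ k ∈ Finset.Icc 1 n,
    (if X (k - 1) ω = x ∧ X k ω = x - 1 then (1 : ℝ) else 0) / Znum X (k - 1) (x - 1) ω

/-- The event `Υ(x) = {Y_∞(x) < ∞}` (the sums `Y_n(x)` are nondecreasing in `n`,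
so finiteness of the limit is boundedness). -/
def Upsilon {Ω : Type*} (X : ℕ → Ω → ℤ) (x : ℤ) : Set Ω :=
  {ω | BddAbove (Set.range fun n => Ynum X n x ω)}

/-- The event `Υ⁺(x) = {Y⁺_∞(x) < ∞}`. -/
def UpsilonPlus {Ω : Type*} (X : ℕ → Ω → ℤ) (x : ℤ) : Set Ω :=
  {ω | BddAbove (Set.range fun n => Yplus X n x ω)}

/-- The event `Υ⁻(x) = {Y⁻_∞(x) < ∞}`. -/
def UpsilonMinus {Ω : Type*} (X : ℕ → Ω → ℤ) (x : ℤ) : Set Ω :=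
  {ω | BddAbove (Set.range fun n => Yminus X n x ω)}

/-- `α⁻_n(y) = Z_n(y-1)/(Z_n(y-1) + Z_n(y+1))`. -/
noncomputable def alphaMinus {Ω : Type*} (X : ℕ → Ω → ℤ) (n : ℕ) (y : ℤ) (ω : Ω) : ℝ :=
  Znum X n (y - 1) ω / (Znum X n (y - 1) ω + Znum X n (y + 1) ω)

/-- `(X_n)` is a vertex-reinforced random walk on `ℤ` started at `v0`:
it is adapted, starts at `v0`, a.s. makes nearest-neighbor steps, and the
conditional law of each step is proportional to the augmented occupations of
the two neighbors. -/
structure IsVRRW {Ω : Type*} {m0 : MeasurableSpace Ω} (μ : Measure Ω)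
    (ℱ : Filtration ℕ m0) (X : ℕ → Ω → ℤ) (v0 : ℤ) : Prop where
  adapted : Adapted ℱ X
  init : ∀ ω, X 0 ω = v0
  nearest : ∀ n, ∀ᵐ ω ∂μ, X (n + 1) ω = X n ω + 1 ∨ X (n + 1) ω = X n ω - 1
  step : ∀ n, ∀ᵐ ω ∂μ, ∀ x : ℤ,
    (μ[Set.indicator {ω' | X (n + 1) ω' = x} (fun _ => (1 : ℝ)) | ℱ n]) ω =
      if x = X n ω + 1 ∨ x = X n ω - 1 then
        Znum X n x ω / (Znum X n (X n ω - 1) ω + Znum X n (X n ω + 1) ω)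
      else 0

/-- `Ỹ⁺_n(x)`: weighted number of crossings from `x+1` to `x` up to time `n`,
with weight `1/Z_{k-1}(x+1)`. -/
noncomputable def Ytildeplus {Ω : Type*} (X : ℕ → Ω → ℤ) (n : ℕ) (x : ℤ) (ω : Ω) : ℝ :=
  ∑ k ∈ Finset.Icc 1 n,
    (if X (k - 1) ω = x + 1 ∧ X k ω = x then (1 : ℝ) else 0) / Znum X (k - 1) (x + 1) ω


lemma Znum_pos {Ω : Type*} (X : ℕ → Ω → ℤ) (n : ℕ) (v : ℤ) (ω : Ω) :
    0 < Znum X n v ω := by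
  unfold Znum
  have : (0:ℝ) ≤ ∑ i ∈ Finset.range (n + 1), if X i ω = v then (1 : ℝ) else 0 :=
    Finset.sum_nonneg (by intro i _; split <;> norm_num)
  linarith

lemma Znum_succ {Ω : Type*} (X : ℕ → Ω → ℤ) (n : ℕ) (v : ℤ) (ω : Ω) :
    Znum X (n + 1) v ω = Znum X n v ω + (if X (n + 1) ω = v then (1:ℝ) else 0) := by
  unfold Znum
  rw [Finset.sum_range_succ]
  ring

lemma Yplus_succ {Ω : Type*} (X : ℕ → Ω → ℤ) (n : ℕ) (x : ℤ) (ω : Ω) :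
    Yplus X (n + 1) x ω = Yplus X n x ω +
      (if X n ω = x ∧ X (n + 1) ω = x + 1 then (1:ℝ) else 0) / Znum X n (x + 1) ω := by
  unfold Yplus
  rw [Finset.sum_Icc_succ_top (Nat.le_add_left 1 n)]
  simp

lemma Ytildeplus_succ {Ω : Type*} (X : ℕ → Ω → ℤ) (n : ℕ) (x : ℤ) (ω : Ω) :
    Ytildeplus X (n + 1) x ω = Ytildeplus X n x ω +
      (if X n ω = x + 1 ∧ X (n + 1) ω = x then (1:ℝ) else 0) / Znum X n (x + 1) ω := by
  unfold Ytildeplus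
  rw [Finset.sum_Icc_succ_top (Nat.le_add_left 1 n)]
  simp

lemma key_step {Ω : Type*} (X : ℕ → Ω → ℤ) (x : ℤ) (ω : Ω) (m : ℕ)
    (hstep : X (m + 2) ω = X (m + 1) ω + 1 ∨ X (m + 2) ω = X (m + 1) ω - 1) :
    Yplus X (m + 2) x ω - Ytildeplus X (m + 2) x ω +
        (if X (m + 2) ω ≤ x then (1 : ℝ) else 0) / Znum X (m + 1) (x + 1) ω =
    Yplus X (m + 1) x ω - Ytildeplus X (m + 1) x ω +
        (if X (m + 1) ω ≤ x then (1 : ℝ) else 0) / Znum X m (x + 1) ω := by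
  have hZ : 0 < Znum X m (x + 1) ω := Znum_pos X m (x + 1) ω
  rw [Yplus_succ, Ytildeplus_succ, Znum_succ]
  set a := X (m + 1) ω with ha
  set b := X (m + 2) ω with hb
  set Z := Znum X m (x + 1) ω with hZdef
  rcases hstep with hb1 | hb1 <;>
    rcases lt_trichotomy a x with hax | hax | hax
  · have h1 : ¬(a = x ∧ b = x + 1) := by omega
    have h2 : ¬(a = x + 1 ∧ b = x) := by omega
    have h3 : b ≤ x ↔ a ≤ x - 1 := by omega
    have h4 : ¬(a = x + 1) := by omega
    have h5 : a ≤ x := le_of_lt hax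
    simp only [if_neg h1, if_neg h2, if_neg h4, if_pos h5, if_pos (h3.mpr (by omega))]
    ring
  · have h1 : a = x ∧ b = x + 1 := by omega
    have h2 : ¬(a = x + 1 ∧ b = x) := by omega
    have h3 : ¬(b ≤ x) := by omega
    have h4 : ¬(a = x + 1) := by omega
    simp only [if_pos h1, if_neg h2, if_neg h3, if_neg h4, if_pos hax.le]
    ring
  · rcases eq_or_lt_of_le (by omega : x + 1 ≤ a) with hax1 | hax1
    · have h1 : ¬(a = x ∧ b = x + 1) := by omega
      have h2 : ¬(a = x + 1 ∧ b = x) := by omega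
      have h3 : ¬(b ≤ x) := by omega
      have h5 : ¬(a ≤ x) := by omega
      simp only [if_neg h1, if_neg h2, if_neg h3, if_pos hax1.symm, if_neg h5]
      ring
    · have h1 : ¬(a = x ∧ b = x + 1) := by omega
      have h2 : ¬(a = x + 1 ∧ b = x) := by omega
      have h3 : ¬(b ≤ x) := by omega
      have h4 : ¬(a = x + 1) := by omega
      have h5 : ¬(a ≤ x) := by omega
      simp only [if_neg h1, if_neg h2, if_neg h3, if_neg h4, if_neg h5]
      ring
  · have h1 : ¬(a = x ∧ b = x + 1) := by omega
    have h2 : ¬(a = x + 1 ∧ b = x) := by omega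
    have h3 : b ≤ x := by omega
    have h4 : ¬(a = x + 1) := by omega
    have h5 : a ≤ x := le_of_lt hax
    simp only [if_neg h1, if_neg h2, if_pos h3, if_neg h4, if_pos h5]
    ring
  · have h1 : ¬(a = x ∧ b = x + 1) := by omega
    have h2 : ¬(a = x + 1 ∧ b = x) := by omega
    have h3 : b ≤ x := by omega
    have h4 : ¬(a = x + 1) := by omega
    simp only [if_neg h1, if_neg h2, if_pos h3, if_neg h4, if_pos hax.le]
    ring
  · rcases eq_or_lt_of_le (by omega : x + 1 ≤ a) with hax1 | hax1
    · have h1 : ¬(a = x ∧ b = x + 1) := by omega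
      have h2 : a = x + 1 ∧ b = x := by omega
      have h3 : b ≤ x := by omega
      have h5 : ¬(a ≤ x) := by omega
      simp only [if_neg h1, if_pos h2, if_pos h3, if_pos hax1.symm, if_neg h5]
      ring
    · have h1 : ¬(a = x ∧ b = x + 1) := by omega
      have h2 : ¬(a = x + 1 ∧ b = x) := by omega
      have h3 : ¬(b ≤ x) := by omega
      have h4 : ¬(a = x + 1) := by omega
      have h5 : ¬(a ≤ x) := by omega
      simp only [if_neg h1, if_neg h2, if_neg h3, if_neg h4, if_neg h5]
      ring

/-- First equivalence of Proposition 3.1(c) of Tarrès: almost surely,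
`Y⁺_n(x) - Ỹ⁺_n(x) + 1_{X_n ≤ x}/Z_{n-1}(x+1)` is eventually constant in `n`. -/
theorem yplus_sub_ytildeplus_eventually_constant
    {Ω : Type*} {m0 : MeasurableSpace Ω} (μ : Measure Ω) [IsProbabilityMeasure μ]
    (ℱ : Filtration ℕ m0) (X : ℕ → Ω → ℤ) (v0 : ℤ) (h : IsVRRW μ ℱ X v0) (x : ℤ) :
    ∀ᵐ ω ∂μ, ∃ (N : ℕ) (c : ℝ), ∀ n : ℕ, N ≤ n →
      Yplus X n x ω - Ytildeplus X n x ω +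
        (if X n ω ≤ x then (1 : ℝ) else 0) / Znum X (n - 1) (x + 1) ω = c := by
  have hall : ∀ᵐ ω ∂μ, ∀ n : ℕ, X (n + 1) ω = X n ω + 1 ∨ X (n + 1) ω = X n ω - 1 :=
    (MeasureTheory.ae_all_iff).mpr h.nearest
  filter_upwards [hall] with ω hω
  refine ⟨1, Yplus X 1 x ω - Ytildeplus X 1 x ω +
      (if X 1 ω ≤ x then (1 : ℝ) else 0) / Znum X 0 (x + 1) ω, ?_⟩
  intro n hn
  induction n with
  | zero => omega
  | succ m ih =>
    rcases Nat.lt_or_ge 1 (m + 1) with hm | hm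
    · have hm1 : 1 ≤ m := by omega
      obtain ⟨k, rfl⟩ : ∃ k, m = k + 1 := ⟨m - 1, by omega⟩
      have := key_step X x ω k (hω (k + 1))
      simp only [show k + 1 + 1 - 1 = k + 1 from rfl, show k + 1 - 1 = k from rfl] at this ⊢
      rw [this]
      exact ih hm1
    · have : m = 0 := by omega
      subst this
      rfl
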